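/- Let A be symmetric positive semidefinite n×n, C an m×n matrix with full row rank such that Ker(A) ∩ Ker(C) = {0}, and let K = [[A, Cᵀ], [C, 0]] (which is invertible). Then the (2,2) block of K⁻¹ is symmetric negative semidefinite. -/

import Mathlib

open Matrix

theorem stmt2 {n m : ℕ}
    (A : Matrix (Fin n) (Fin n) ℝ) (hA : A.PosSemidef)
    (C : Matrix (Fin m) (Fin n) ℝ) (hC : C.rank = m)
    (hker : ∀ x : Fin n → ℝ, A.mulVec x = 0 → C.mulVec x = 0 → x = 0) :
    (-(Matrix.fromBlocks A Cᵀ C (0 : Matrix (Fin m) (Fin m) ℝ))⁻¹.toBlocks₂₂).PosSemidef := by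
  set K : Matrix (Fin n ⊕ Fin m) (Fin n ⊕ Fin m) ℝ := fromBlocks A Cᵀ C 0 with hK
  -- Cᵀ has injective mulVec
  have hCt : ∀ w : Fin m → ℝ, Cᵀ.mulVec w = 0 → w = 0 := by
    intro w hw
    have hrank : Cᵀ.rank = m := by rw [C.rank_transpose, hC]
    have hrn := LinearMap.finrank_range_add_finrank_ker (Cᵀ).mulVecLin
    rw [show Module.finrank ℝ (LinearMap.range Cᵀ.mulVecLin) = Cᵀ.rank from rfl, hrank,
      Module.finrank_fintype_fun_eq_card, Fintype.card_fin] at hrn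
    have hker0 : LinearMap.ker Cᵀ.mulVecLin = ⊥ :=
      Submodule.finrank_eq_zero.mp (by omega)
    have hmem : w ∈ LinearMap.ker Cᵀ.mulVecLin := by
      rw [LinearMap.mem_ker, mulVecLin_apply]; exact hw
    rw [hker0, Submodule.mem_bot] at hmem
    exact hmem
  -- K has injective mulVec
  have hKinj : Function.Injective K.mulVec := by
    have h := (injective_iff_map_eq_zero (Matrix.mulVecLin K)).mpr ?_
    · rwa [coe_mulVecLin] at h
    intro v hv
    rw [mulVecLin_apply] at hv
    have hv' : K.mulVec (Sum.elim (v ∘ Sum.inl) (v ∘ Sum.inr)) = 0 := by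
      rw [Sum.elim_comp_inl_inr]; exact hv
    rw [hK, fromBlocks_mulVec] at hv'
    set x := v ∘ Sum.inl with hxdef
    set w := v ∘ Sum.inr with hwdef
    have h1 : A.mulVec x + Cᵀ.mulVec w = 0 := by
      funext i
      have := congrFun hv' (Sum.inl i)
      simpa using this
    have h2 : C.mulVec x = 0 := by
      funext i
      have := congrFun hv' (Sum.inr i)
      simpa using this
    have hcross : x ⬝ᵥ Cᵀ.mulVec w = 0 := by
      rw [dotProduct_mulVec, vecMul_transpose, h2, zero_dotProduct]
    have hq : x ⬝ᵥ A.mulVec x = 0 := by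
      have h := congrArg (fun u => x ⬝ᵥ u) h1
      simpa [dotProduct_add, hcross] using h
    have hAx : A.mulVec x = 0 := (hA.dotProduct_mulVec_zero_iff x).mp (by simpa using hq)
    have hx0 : x = 0 := hker x hAx h2
    have hw0 : w = 0 := by
      apply hCt
      have h1' := h1
      rw [hx0, mulVec_zero, zero_add] at h1'
      exact h1'
    ext (i | i)
    · exact congrFun hx0 i
    · exact congrFun hw0 i
  have hKunit : IsUnit K := mulVec_injective_iff_isUnit.mp hKinj
  have hKdet : IsUnit K.det := (isUnit_iff_isUnit_det K).mp hKunit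
  have hKmul : K * K⁻¹ = 1 := mul_nonsing_inv K hKdet
  -- Hermitian
  have hKherm : K.IsHermitian := by
    rw [hK, isHermitian_fromBlocks_iff]
    exact ⟨hA.1, rfl, rfl, isHermitian_zero⟩
  have hKiherm : K⁻¹.IsHermitian := hKherm.inv
  have hKi' : (fromBlocks (K⁻¹).toBlocks₁₁ (K⁻¹).toBlocks₁₂ (K⁻¹).toBlocks₂₁
      (K⁻¹).toBlocks₂₂).IsHermitian := by
    rw [fromBlocks_toBlocks]; exact hKiherm
  have hSherm : ((-(K⁻¹).toBlocks₂₂) : Matrix (Fin m) (Fin m) ℝ).IsHermitian :=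
    ((isHermitian_fromBlocks_iff.mp hKi').2.2.2).neg
  refine posSemidef_iff_dotProduct_mulVec.mpr ⟨hSherm, ?_⟩
  intro y
  set v : Fin n ⊕ Fin m → ℝ := K⁻¹.mulVec (Sum.elim (0 : Fin n → ℝ) y) with hv
  set x := v ∘ Sum.inl with hxdef
  set w := v ∘ Sum.inr with hwdef
  have hvelim : v = Sum.elim x w := by ext (i | i) <;> rfl
  have hKv : K.mulVec v = Sum.elim (0 : Fin n → ℝ) y := by
    rw [hv, mulVec_mulVec, hKmul, one_mulVec]
  rw [hvelim, hK, fromBlocks_mulVec] at hKv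
  have h1 : A.mulVec x + Cᵀ.mulVec w = 0 := by
    funext i
    have := congrFun hKv (Sum.inl i)
    simpa using this
  have h2 : C.mulVec x = y := by
    funext i
    have := congrFun hKv (Sum.inr i)
    simpa using this
  have hw : (K⁻¹).toBlocks₂₂.mulVec y = w := by
    funext i
    show _ = (K⁻¹.mulVec (Sum.elim (0 : Fin n → ℝ) y)) (Sum.inr i)
    simp [mulVec, dotProduct, Fintype.sum_sum_type, toBlocks₂₂]
  have hCtw : Cᵀ.mulVec w = -(A.mulVec x) := by
    rw [eq_neg_iff_add_eq_zero, add_comm]; exact h1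
  have key : y ⬝ᵥ (K⁻¹).toBlocks₂₂.mulVec y = -(x ⬝ᵥ A.mulVec x) := by
    calc y ⬝ᵥ (K⁻¹).toBlocks₂₂.mulVec y = (C.mulVec x) ⬝ᵥ w := by rw [hw, h2]
      _ = x ⬝ᵥ Cᵀ.mulVec w := by rw [dotProduct_mulVec, vecMul_transpose]
      _ = x ⬝ᵥ (-(A.mulVec x)) := by rw [hCtw]
      _ = -(x ⬝ᵥ A.mulVec x) := dotProduct_neg x _
  have hfin : star y ⬝ᵥ (-(K⁻¹).toBlocks₂₂).mulVec y = x ⬝ᵥ A.mulVec x := by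
    simp [neg_mulVec, key]
  rw [hfin]
  exact hA.dotProduct_mulVec_nonneg x
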